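/- Let (K, v) be a Henselian discrete valued field with char(K) = 0 and char(K̂) = p > 0. Every λ ∈ K with v(λ − 1) > 0 and λ ∉ K^{*p} lies in a coset λ·K^{*p} containing a normal element over K, i.e., an element λ′ with v(λ′ − 1) maximal among all elements of the coset congruent to 1 modulo the maximal ideal. -/

import Mathlib

noncomputable section

open IsLocalRing

local notation "ℤᵐ⁰" => WithZero (Multiplicative ℤ)

/-- The value group of a valuation on a field `K`, as a subgroup of the units of the
value monoid: the subgroup generated by the values of nonzero elements of `K`. -/
def valGroup {K Γ : Type*} [Field K] [LinearOrderedCommGroupWithZero Γ]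
    (v : Valuation K Γ) : Subgroup Γˣ :=
  Subgroup.closure { g : Γˣ | ∃ x : K, x ≠ 0 ∧ v x = ↑g }

/-- The subfield of `p`-th powers of a field `k` (for `k` of characteristic `p` this is
the image of the Frobenius). -/
def pthPowers (k : Type*) [Field k] (p : ℕ) : Subfield k :=
  Subfield.closure { y : k | ∃ x : k, x ^ p = y }

open Polynomial Finset

lemma mem_max_iff {K : Type} [Field K] (v : Valuation K ℤᵐ⁰) (x : v.integer) :
    x ∈ maximalIdeal v.integer ↔ v (x : K) < 1 := by
  rw [IsLocalRing.mem_maximalIdeal, mem_nonunits_iff,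
    (Valuation.integer.integers v).isUnit_iff_valuation_eq_one]
  exact ⟨fun h => lt_of_le_of_ne x.2 (by exact h), fun h h' => absurd h' (ne_of_lt h)⟩

lemma pow_eq_of_close {K : Type} [Field K] (p : ℕ) (hp : p.Prime)
    (v : Valuation K ℤᵐ⁰) (hhens : HenselianLocalRing v.integer) [CharZero K]
    (hres : CharP (IsLocalRing.ResidueField v.integer) p)
    (μ : K) (hμ : v (μ - 1) < v (p : K) ^ 2) : ∃ t : K, t ^ p = μ := by
  have hp0 : (p : K) ≠ 0 := Nat.cast_ne_zero.mpr hp.ne_zero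
  have hvp0 : v (p : K) ≠ 0 := by simpa using hp0
  -- p is in the maximal ideal
  have hpm : ((p : ℕ) : v.integer) ∈ maximalIdeal v.integer := by
    have h1 : ((p : ℕ) : ResidueField v.integer) = 0 := CharP.cast_eq_zero _ p
    have h2 : residue v.integer ((p : ℕ) : v.integer) = ((p : ℕ) : ResidueField v.integer) :=
      map_natCast _ p
    rw [h1] at h2
    exact (Ideal.Quotient.eq_zero_iff_mem).mp h2
  have hvp1 : v (p : K) < 1 := by
    have h := (mem_max_iff v _).mp hpm
    exact_mod_cast h
  -- the element c
  set c : K := (1 - μ) / (p : K) ^ 2 with hcdef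
  have hkey : c * (p : K) ^ 2 = 1 - μ := by rw [hcdef]; field_simp
  have hvm : v (1 - μ) = v (μ - 1) := by
    rw [show (1 : K) - μ = -(μ - 1) by ring, Valuation.map_neg]
  have hc : v c < 1 := by
    by_contra h
    push_neg at h
    have h2 : v (p : K) ^ 2 ≤ v c * v (p : K) ^ 2 := le_mul_of_one_le_left' h
    have h3 : v c * v (p : K) ^ 2 = v (1 - μ) := by rw [← map_pow, ← map_mul, hkey]
    rw [h3, hvm] at h2
    exact absurd (lt_of_lt_of_le hμ h2) (lt_irrefl _)
  -- elements of the integer ring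
  set cO : v.integer := ⟨c, hc.le⟩ with hcO
  have hcm : cO ∈ maximalIdeal v.integer := (mem_max_iff v cO).mpr hc
  set d : ℕ → v.integer :=
    fun k => (p.choose k : v.integer) * ((p : ℕ) : v.integer) ^ (p-k-2) * cO ^ (p-k-1) with hd
  set F : Polynomial v.integer :=
    X ^ p + X ^ (p-1) + ∑ k ∈ range (p-1), C (d k) * X ^ k with hF
  have hmonic : F.Monic := by
    rw [hF, add_assoc]
    apply monic_X_pow_add
    apply lt_of_le_of_lt (degree_add_le _ _)
    rw [max_lt_iff]
    constructor
    · rw [degree_X_pow]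
      exact_mod_cast Nat.sub_lt hp.pos one_pos
    · apply lt_of_le_of_lt (degree_sum_le _ _)
      rw [Finset.sup_lt_iff (by exact_mod_cast WithBot.bot_lt_coe p)]
      intro k hk
      apply lt_of_le_of_lt (degree_C_mul_X_pow_le _ _)
      exact_mod_cast (mem_range.mp hk).trans_le (by omega)
  have hFeval : ∀ x : v.integer,
      F.eval x = x ^ p + x ^ (p-1) + ∑ k ∈ range (p-1), d k * x ^ k := by
    intro x
    rw [hF]
    simp [eval_finset_sum]
  have hev : F.eval (-1) ∈ maximalIdeal v.integer := by
    rw [hFeval]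
    have h2 : ((-1 : v.integer) ^ p + (-1 : v.integer) ^ (p-1)) = 0 := by
      have hq : p = (p-1)+1 := by have := hp.pos; omega
      rw [hq]
      simp only [Nat.add_sub_cancel, pow_succ]
      ring
    rw [h2, zero_add]
    apply Ideal.sum_mem
    intro k hk
    have h1 : p-k-1 = (p-k-2)+1 := by have := mem_range.mp hk; omega
    have h3 : cO ^ (p-k-1) ∈ maximalIdeal v.integer := by
      rw [h1, pow_succ]
      exact Ideal.mul_mem_left _ _ hcm
    exact Ideal.mul_mem_right _ _ (Ideal.mul_mem_left _ _ h3)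
  have hFd : F.derivative.eval (-1) =
      ((p : ℕ) : v.integer) * (-1) ^ (p-1) + ((p-1 : ℕ) : v.integer) * (-1) ^ (p-1-1)
        + ∑ k ∈ range (p-1), d k * (((k : ℕ) : v.integer) * (-1) ^ (k-1)) := by
    rw [hF]
    simp [derivative_X_pow, derivative_C_mul, derivative_sum, eval_finset_sum, mul_assoc]
  have hunit : IsUnit (F.derivative.eval (-1)) := by
    by_contra hnu
    have hmem : F.derivative.eval (-1) ∈ maximalIdeal v.integer := hnu
    rw [hFd] at hmem
    have hA : ((p : ℕ) : v.integer) * (-1) ^ (p-1) ∈ maximalIdeal v.integer :=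
      Ideal.mul_mem_right _ _ hpm
    have hS : (∑ k ∈ range (p-1), d k * (((k : ℕ) : v.integer) * (-1) ^ (k-1)))
        ∈ maximalIdeal v.integer := by
      apply Ideal.sum_mem
      intro k hk
      have h1 : p-k-1 = (p-k-2)+1 := by have := mem_range.mp hk; omega
      have h3 : cO ^ (p-k-1) ∈ maximalIdeal v.integer := by
        rw [h1, pow_succ]
        exact Ideal.mul_mem_left _ _ hcm
      exact Ideal.mul_mem_right _ _ (Ideal.mul_mem_left _ _ h3)
    have hB : ((p-1 : ℕ) : v.integer) * (-1) ^ (p-1-1) ∈ maximalIdeal v.integer := by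
      have heq : ((p-1 : ℕ) : v.integer) * (-1) ^ (p-1-1) =
          (((p : ℕ) : v.integer) * (-1) ^ (p-1) + ((p-1 : ℕ) : v.integer) * (-1) ^ (p-1-1)
            + ∑ k ∈ range (p-1), d k * (((k : ℕ) : v.integer) * (-1) ^ (k-1)))
          - (∑ k ∈ range (p-1), d k * (((k : ℕ) : v.integer) * (-1) ^ (k-1)))
          - ((p : ℕ) : v.integer) * (-1) ^ (p-1) := by ring
      rw [heq]
      exact Ideal.sub_mem _ (Ideal.sub_mem _ hmem hS) hA
    have hB2 : ((p-1 : ℕ) : v.integer) ∈ maximalIdeal v.integer := by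
      have h4 : ((p-1 : ℕ) : v.integer) =
          ((p-1 : ℕ) : v.integer) * (-1) ^ (p-1-1) * (-1) ^ (p-1-1) := by
        rw [mul_assoc, ← pow_add]
        rw [Even.neg_one_pow ⟨p-1-1, rfl⟩, mul_one]
      rw [h4]
      exact Ideal.mul_mem_right _ _ hB
    have hone : (1 : v.integer) ∈ maximalIdeal v.integer := by
      have h5 : (1 : v.integer) = ((p : ℕ) : v.integer) - ((p-1 : ℕ) : v.integer) := by
        have h6 : ((p-1 : ℕ) : v.integer) + 1 = ((p : ℕ) : v.integer) := by
          exact_mod_cast congrArg (Nat.cast : ℕ → v.integer) (show (p-1)+1 = p by have := hp.pos; omega)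
        linear_combination h6
      rw [h5]
      exact Ideal.sub_mem _ hpm hB2
    exact (maximalIdeal.isMaximal _).ne_top ((Ideal.eq_top_iff_one _).mpr hone)
  obtain ⟨a, haroot, hamem⟩ := hhens.is_henselian F hmonic (-1) hev hunit
  have ha1 : a + 1 ∈ maximalIdeal v.integer := by
    simpa [sub_neg_eq_add] using hamem
  have hanm : a ∉ maximalIdeal v.integer := by
    intro h
    have hone : (1 : v.integer) ∈ maximalIdeal v.integer := by
      have : (1 : v.integer) = (a + 1) - a := by ring
      rw [this]
      exact Ideal.sub_mem _ ha1 h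
    exact (maximalIdeal.isMaximal _).ne_top ((Ideal.eq_top_iff_one _).mpr hone)
  have hα0 : (a : K) ≠ 0 := by
    intro h0
    exact hanm (by rw [show a = 0 from Subtype.ext h0]; exact zero_mem _)
  have hroot : a ^ p + a ^ (p-1) + ∑ k ∈ range (p-1), d k * a ^ k = 0 := by
    have h := haroot
    rwa [Polynomial.IsRoot, hFeval] at h
  set α : K := (a : K) with hα
  have hrootK : α ^ p + α ^ (p-1)
      + ∑ k ∈ range (p-1), ((p.choose k : K) * (p : K) ^ (p-k-2) * c ^ (p-k-1)) * α ^ k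
      = 0 := by
    have h := congrArg (fun x : v.integer => (x : K)) hroot
    push_cast [hd, hcO] at h
    convert h using 2
  have hsplit : ∑ k ∈ range (p+1), α ^ k * ((p : K) * c) ^ (p-k) * (p.choose k : K)
      = (∑ k ∈ range (p-1), α ^ k * ((p : K) * c) ^ (p-k) * (p.choose k : K))
        + α ^ (p-1) * ((p : K) * c) * (p : K) + α ^ p := by
    have h1 : p + 1 = (p-1) + 1 + 1 := by have := hp.pos; omega
    rw [h1, sum_range_succ, sum_range_succ]
    have e1 : (p-1)+1 = p := by have := hp.pos; omega
    rw [e1]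
    have e2 : p - (p-1) = 1 := by have := hp.pos; omega
    have e3 : p.choose (p-1) = p := by
      have h7 := Nat.choose_symm (show 1 ≤ p from hp.pos)
      rwa [Nat.choose_one_right] at h7
    rw [e2, e3, Nat.sub_self, Nat.choose_self]
    ring
  have hterm : ∀ k ∈ range (p-1), α ^ k * ((p : K) * c) ^ (p-k) * (p.choose k : K)
      = ((p : K) ^ 2 * c) * (((p.choose k : K) * (p : K) ^ (p-k-2) * c ^ (p-k-1)) * α ^ k) := by
    intro k hk
    have hk' : k < p - 1 := mem_range.mp hk
    rw [mul_pow,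
      show ((p : K)) ^ (p-k) = (p : K) ^ (p-k-2) * (p : K) ^ 2 from by
        rw [← pow_add]; congr 1; omega,
      show c ^ (p-k) = c ^ (p-k-1) * c ^ 1 from by
        rw [← pow_add]; congr 1; omega]
    ring
  have hpow : (α + (p : K) * c) ^ p = μ * α ^ p := by
    rw [add_pow, hsplit, Finset.sum_congr rfl hterm, ← Finset.mul_sum]
    have hS : ∑ k ∈ range (p-1), ((p.choose k : K) * (p : K) ^ (p-k-2) * c ^ (p-k-1)) * α ^ k
        = -(α ^ p + α ^ (p-1)) := by linear_combination hrootK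
    rw [hS]
    linear_combination (-(α ^ p)) * hkey
  refine ⟨(α + (p : K) * c) / α, ?_⟩
  rw [div_pow, hpow, mul_div_assoc, div_self (pow_ne_zero _ hα0), mul_one]

theorem exists_normal_element
    {K : Type} [Field K]
    (p : ℕ) (hp : p.Prime)
    (v : Valuation K ℤᵐ⁰)
    (hdisc : Function.Surjective v)
    (hhens : HenselianLocalRing v.integer)
    [CharZero K]
    (hres : CharP (IsLocalRing.ResidueField v.integer) p)
    (lam : K) (hlam : v (lam - 1) < 1)
    (hnp : ¬ ∃ z : K, z ^ p = lam) :
    ∃ lam' : K, (∃ z : K, z ≠ 0 ∧ lam' = lam * z ^ p) ∧ v (lam' - 1) < 1 ∧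
      (¬ ∃ z : K, z ^ p = lam') ∧
      ∀ μ : K, (∃ z : K, z ≠ 0 ∧ μ = lam * z ^ p) → v (μ - 1) < 1 →
        v (lam' - 1) ≤ v (μ - 1) := by
  classical
  have hp0K : (p : K) ≠ 0 := Nat.cast_ne_zero.mpr hp.ne_zero
  have hvp0 : v (p : K) ≠ 0 := by simpa using hp0K
  obtain ⟨mp, hmp⟩ := WithZero.ne_zero_iff_exists.mp hvp0
  set P : ℤ → Prop := fun n => ∃ z : K, z ≠ 0 ∧
      v (lam * z ^ p - 1) = ((Multiplicative.ofAdd n : Multiplicative ℤ) : ℤᵐ⁰) with hP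
  have hcoset : ∀ z : K, z ≠ 0 → ¬ ∃ w : K, w ^ p = lam * z ^ p := by
    rintro z hz ⟨w, hw⟩
    refine hnp ⟨w * z⁻¹, ?_⟩
    rw [mul_pow, hw]
    field_simp
    rw [one_div, inv_pow, mul_assoc, mul_inv_cancel₀ (pow_ne_zero _ hz), mul_one]
  have hne : ∀ z : K, z ≠ 0 → v (lam * z ^ p - 1) ≠ 0 := by
    intro z hz h0
    rw [Valuation.zero_iff, sub_eq_zero] at h0
    exact hcoset z hz ⟨1, by rw [one_pow, h0]⟩
  have hbdd : ∀ n, P n → 2 * Multiplicative.toAdd mp ≤ n := by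
    intro n hn
    obtain ⟨z, hz, hval⟩ := hn
    by_contra hlt
    push_neg at hlt
    have hcl : v (lam * z ^ p - 1) < v (p : K) ^ 2 := by
      rw [hval, ← hmp, ← WithZero.coe_pow, WithZero.coe_lt_coe, ← Multiplicative.toAdd_lt]
      simpa [two_mul] using hlt
    exact hcoset z hz (pow_eq_of_close p hp v hhens hres _ hcl)
  have hex : ∃ n, P n := by
    obtain ⟨m, hm⟩ := WithZero.ne_zero_iff_exists.mp (hne 1 one_ne_zero)
    exact ⟨Multiplicative.toAdd m, 1, one_ne_zero, by rw [← hm]; simp⟩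
  obtain ⟨n₀, hn₀, hleast⟩ := Int.exists_least_of_bdd ⟨2 * Multiplicative.toAdd mp, hbdd⟩ hex
  obtain ⟨z₀, hz₀, hval₀⟩ := hn₀
  have hn₀neg : n₀ < 0 := by
    obtain ⟨m, hm⟩ := WithZero.ne_zero_iff_exists.mp (hne 1 one_ne_zero)
    have hPm : P (Multiplicative.toAdd m) := ⟨1, one_ne_zero, by rw [← hm]; simp⟩
    have h1 : Multiplicative.toAdd m < 0 := by
      have h2 : v (lam * 1 ^ p - 1) < 1 := by simpa using hlam
      rw [← hm, ← WithZero.coe_one, WithZero.coe_lt_coe, ← Multiplicative.toAdd_lt] at h2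
      simpa using h2
    exact lt_of_le_of_lt (hleast _ hPm) h1
  refine ⟨lam * z₀ ^ p, ⟨z₀, hz₀, rfl⟩, ?_, hcoset z₀ hz₀, ?_⟩
  · rw [hval₀, ← WithZero.coe_one, WithZero.coe_lt_coe, ← Multiplicative.toAdd_lt]
    simpa using hn₀neg
  · rintro μ ⟨z, hz, rfl⟩ hμ1
    obtain ⟨m, hm⟩ := WithZero.ne_zero_iff_exists.mp (hne z hz)
    have hPm : P (Multiplicative.toAdd m) := ⟨z, hz, by rw [← hm]; simp⟩
    have h := hleast _ hPm
    rw [hval₀, ← hm, WithZero.coe_le_coe, ← Multiplicative.toAdd_le]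
    simpa using h
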